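/- (Robbins–Siegmund corollary.) Let (Ω, F, (F_n), P) be a filtered probability space and let (Y_n), (a_n), (b_n), (r_n) be non-negative adapted stochastic processes with ∑ a_n = ∞ almost surely, ∑ b_n < ∞ almost surely, and r_n > 0. If for each n, E[r_{n+1} Y_{n+1} | F_n] ≤ (1 - a_n) r_n Y_n + b_n, then r_n Y_n → 0 almost surely as n → ∞. -/

import Mathlib

open Filter MeasureTheory Topology

/-- Fixed-level-M stopped Robbins–Siegmund supermartingale convergence. -/
theorem rs_aux {Ω : Type*} {m0 : MeasurableSpace Ω} (μ : Measure Ω) [IsProbabilityMeasure μ]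
    (ℱ : Filtration ℕ m0) (Z a b : ℕ → Ω → ℝ)
    (hZ : ∀ n ω, 0 ≤ Z n ω) (ha : ∀ n ω, 0 ≤ a n ω) (hb : ∀ n ω, 0 ≤ b n ω)
    (hZad : StronglyAdapted ℱ Z) (haad : StronglyAdapted ℱ a) (hbad : StronglyAdapted ℱ b)
    (hint : ∀ n, Integrable (Z n) μ)
    (hrec : ∀ n, ∀ᵐ ω ∂μ, (μ[Z (n+1) | ℱ n]) ω ≤ (1 - a n ω) * Z n ω + b n ω)
    (M : ℕ) :
    ∀ᵐ ω ∂μ, (∀ n, ∑ j ∈ Finset.range (n+1), b j ω ≤ (M:ℝ)) →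
      ∃ c, Tendsto (fun n => Z n ω + ∑ k ∈ Finset.range n, (a k ω * Z k ω - b k ω))
        atTop (𝓝 c) := by
  classical
  -- measurability of the raw processes w.r.t. m0
  have hZm : ∀ n, StronglyMeasurable[m0] (Z n) := fun n => (hZad n).mono (ℱ.le n)
  have ham : ∀ n, StronglyMeasurable[m0] (a n) := fun n => (haad n).mono (ℱ.le n)
  have hbm : ∀ n, StronglyMeasurable[m0] (b n) := fun n => (hbad n).mono (ℱ.le n)
  -- the truncation sets
  set A : ℕ → Set Ω := fun k => {ω | ∑ j ∈ Finset.range (k+1), b j ω ≤ (M:ℝ)} with hA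
  have hAmeasF : ∀ k, MeasurableSet[ℱ k] (A k) := by
    intro k
    have hsm : StronglyMeasurable[ℱ k] (fun ω => ∑ j ∈ Finset.range (k+1), b j ω) := by
      apply Finset.stronglyMeasurable_fun_sum
      intro j hj
      exact (hbad j).mono (ℱ.mono (Nat.lt_succ_iff.mp (Finset.mem_range.mp hj)))
    exact measurableSet_le hsm.measurable measurable_const
  have hAmeas : ∀ k, MeasurableSet (A k) := fun k => ℱ.le k _ (hAmeasF k)
  have hAanti : ∀ {j k : ℕ}, j ≤ k → A k ⊆ A j := by
    intro j k hjk ω hω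
    simp only [hA, Set.mem_setOf_eq] at hω ⊢
    refine le_trans ?_ hω
    exact Finset.sum_le_sum_of_subset_of_nonneg
      (Finset.range_subset_range.2 (by omega)) (fun i _ _ => hb i ω)
  -- b is bounded by M on A k
  have hbA : ∀ k ω, ω ∈ A k → b k ω ≤ (M:ℝ) := by
    intro k ω hω
    simp only [hA, Set.mem_setOf_eq] at hω
    refine le_trans ?_ hω
    exact Finset.single_le_sum (fun i _ => hb i ω) (Finset.self_mem_range_succ k)
  -- a.e. bound  a n * Z n ≤ Z n + b n
  have haZ : ∀ n, ∀ᵐ ω ∂μ, a n ω * Z n ω ≤ Z n ω + b n ω := by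
    intro n
    filter_upwards [hrec n, condExp_nonneg (m := ℱ n) (μ := μ)
      (Eventually.of_forall (hZ (n+1)))] with ω h1 h2
    simp only [Pi.zero_apply] at h2
    nlinarith [h2, h1]
  -- the pieces
  set h : ℕ → Ω → ℝ := fun k ω => (1 - a k ω) * Z k ω + b k ω with hh
  set D : ℕ → Ω → ℝ := fun k => (A k).indicator (fun ω => Z (k+1) ω - h k ω) with hD
  set V : ℕ → Ω → ℝ := fun n ω => Z 0 ω + ∑ k ∈ Finset.range n, D k ω with hV
  -- integrability of indicator pieces
  have hind1 : ∀ k, Integrable ((A k).indicator (Z (k+1))) μ :=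
    fun k => (hint (k+1)).indicator (hAmeas k)
  have hhm : ∀ k, StronglyMeasurable[ℱ k] (h k) := by
    intro k
    exact ((stronglyMeasurable_const.sub (haad k)).mul (hZad k)).add (hbad k)
  have hind2 : ∀ k, Integrable ((A k).indicator (h k)) μ := by
    intro k
    refine Integrable.mono' (g := fun ω => 2 * Z k ω + 2 * (M:ℝ))
      (((hint k).const_mul 2).add (integrable_const _))
      (((hhm k).mono (ℱ.le k)).indicator (hAmeas k)).aestronglyMeasurable ?_
    filter_upwards [haZ k] with ω hω
    by_cases hmem : ω ∈ A k
    · rw [Set.indicator_of_mem hmem]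
      have hbM := hbA k ω hmem
      have h0 := hZ k ω
      have h1 := ha k ω
      have h2 := hb k ω
      rw [Real.norm_eq_abs, abs_le]
      simp only [hh]
      constructor <;> nlinarith
    · rw [Set.indicator_of_notMem hmem]
      simp only [norm_zero]
      have := hZ k ω
      positivity
  have hDint : ∀ k, Integrable (D k) μ := by
    intro k
    have : D k = (A k).indicator (Z (k+1)) - (A k).indicator (h k) := by
      ext ω
      by_cases hmem : ω ∈ A k
      · simp [hD, Set.indicator_of_mem hmem]
      · simp [hD, Set.indicator_of_notMem hmem]
    rw [this]
    exact (hind1 k).sub (hind2 k)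
  -- V adapted / integrable
  have hDsm : ∀ k, StronglyMeasurable[ℱ (k+1)] (D k) := by
    intro k
    refine StronglyMeasurable.indicator ?_ ((ℱ.mono (Nat.le_succ k)) _ (hAmeasF k))
    exact (hZad (k+1)).sub ((hhm k).mono (ℱ.mono (Nat.le_succ k)))
  have hVadp : StronglyAdapted ℱ V := by
    intro n
    refine ((hZad 0).mono (ℱ.mono (Nat.zero_le n))).add ?_
    apply Finset.stronglyMeasurable_fun_sum
    intro k hk
    exact (hDsm k).mono (ℱ.mono (Finset.mem_range.mp hk))
  have hVint : ∀ n, Integrable (V n) μ := by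
    intro n
    exact (hint 0).add (integrable_finset_sum _ (fun k _ => hDint k))
  -- supermartingale property
  have hVsucc : ∀ n ω, V (n+1) ω = V n ω + D n ω := by
    intro n ω
    simp [hV, Finset.sum_range_succ, add_assoc]
  have hcond : ∀ n, μ[V (n+1) | ℱ n] ≤ᵐ[μ] V n := by
    intro n
    have e1 : μ[V (n+1) | ℱ n] =ᵐ[μ] μ[V n | ℱ n] + μ[D n | ℱ n] := by
      have : V (n+1) = V n + D n := by ext ω; exact hVsucc n ω
      rw [this]
      exact condExp_add (hVint n) (hDint n) _
    have e2 : μ[V n | ℱ n] = V n :=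
      condExp_of_stronglyMeasurable (ℱ.le n) (hVadp n) (hVint n)
    have e3 : μ[D n | ℱ n] =ᵐ[μ]
        (A n).indicator (μ[Z (n+1) | ℱ n]) - (A n).indicator (h n) := by
      have hsplit : D n = (A n).indicator (Z (n+1)) - (A n).indicator (h n) := by
        ext ω
        by_cases hmem : ω ∈ A n
        · simp [hD, Set.indicator_of_mem hmem]
        · simp [hD, Set.indicator_of_notMem hmem]
      rw [hsplit]
      refine (condExp_sub (hind1 n) (hind2 n) _).trans ?_
      have c1 : μ[(A n).indicator (Z (n+1)) | ℱ n] =ᵐ[μ] (A n).indicator (μ[Z (n+1) | ℱ n]) :=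
        condExp_indicator (hint (n+1)) (hAmeasF n)
      have c2 : μ[(A n).indicator (h n) | ℱ n] = (A n).indicator (h n) :=
        condExp_of_stronglyMeasurable (ℱ.le n) ((hhm n).indicator (hAmeasF n)) (hind2 n)
      rw [c2]
      exact c1.sub (EventuallyEq.refl _ _)
    have e4 : μ[D n | ℱ n] ≤ᵐ[μ] 0 := by
      refine e3.trans_le ?_
      filter_upwards [hrec n] with ω hω
      by_cases hmem : ω ∈ A n
      · simp only [Pi.sub_apply, Set.indicator_of_mem hmem, Pi.zero_apply]
        have : (μ[Z (n+1) | ℱ n]) ω ≤ h n ω := hω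
        linarith
      · simp [Set.indicator_of_notMem hmem]
    calc μ[V (n+1) | ℱ n] =ᵐ[μ] μ[V n | ℱ n] + μ[D n | ℱ n] := e1
      _ =ᵐ[μ] V n + μ[D n | ℱ n] := by rw [e2]
      _ ≤ᵐ[μ] V n := by
          filter_upwards [e4] with ω hω
          simp only [Pi.zero_apply] at hω
          simp only [Pi.add_apply]
          linarith
  have hsuper : Supermartingale V ℱ μ := supermartingale_nat hVadp hVint hcond
  -- pointwise identity on the event of never stopping
  have hQ : ∀ n ω, (∀ k < n, ω ∈ A k) →
      V n ω = Z n ω + ∑ k ∈ Finset.range n, (a k ω * Z k ω - b k ω) := by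
    intro n
    induction n with
    | zero => intro ω _; simp [hV]
    | succ n ih =>
      intro ω hω
      have hmem : ω ∈ A n := hω n (Nat.lt_succ_self n)
      have := ih ω (fun k hk => hω k (Nat.lt_succ_of_lt hk))
      rw [hVsucc n ω, this, Finset.sum_range_succ]
      simp only [hD, Set.indicator_of_mem hmem, hh]
      ring
  -- pointwise lower bound
  have hVlb : ∀ n ω, -(M:ℝ) ≤ V n ω := by
    intro n
    induction n with
    | zero =>
      intro ω
      have := hZ 0 ω
      simp only [hV, Finset.range_zero, Finset.sum_empty, add_zero]
      have : (0:ℝ) ≤ (M:ℝ) := Nat.cast_nonneg M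
      linarith [hZ 0 ω]
    | succ n ih =>
      intro ω
      by_cases hmem : ω ∈ A n
      · have hall : ∀ k < n + 1, ω ∈ A k := fun k hk => hAanti (Nat.lt_succ_iff.mp hk) hmem
        rw [hQ (n+1) ω hall]
        have h1 : (0:ℝ) ≤ Z (n+1) ω := hZ (n+1) ω
        have h2 : ∑ k ∈ Finset.range (n+1), (a k ω * Z k ω - b k ω)
            ≥ - ∑ k ∈ Finset.range (n+1), b k ω := by
          rw [Finset.sum_sub_distrib]
          have : (0:ℝ) ≤ ∑ k ∈ Finset.range (n+1), a k ω * Z k ω :=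
            Finset.sum_nonneg (fun k _ => mul_nonneg (ha k ω) (hZ k ω))
          linarith
        have h3 : ∑ k ∈ Finset.range (n+1), b k ω ≤ (M:ℝ) := hmem
        linarith
      · rw [hVsucc n ω]
        simp only [hD, Set.indicator_of_notMem hmem, add_zero]
        exact ih ω
  -- L¹ bound
  have hL1 : ∀ n, eLpNorm (V n) 1 μ ≤ ENNReal.ofReal (∫ ω, Z 0 ω ∂μ + 2 * (M:ℝ)) := by
    intro n
    rw [eLpNorm_one_eq_lintegral_enorm, ← ofReal_integral_norm_eq_lintegral_enorm (hVint n)]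
    apply ENNReal.ofReal_le_ofReal
    have step1 : ∫ ω, ‖V n ω‖ ∂μ ≤ ∫ ω, (V n ω + 2 * (M:ℝ)) ∂μ := by
      refine integral_mono (hVint n).norm ((hVint n).add (integrable_const _)) ?_
      intro ω
      show ‖V n ω‖ ≤ V n ω + 2 * (M:ℝ)
      rw [Real.norm_eq_abs, abs_le]
      constructor <;> [linarith [hVlb n ω]; linarith [hVlb n ω, Nat.cast_nonneg (α := ℝ) M]]
    have step2 : ∫ ω, (V n ω + 2 * (M:ℝ)) ∂μ = ∫ ω, V n ω ∂μ + 2 * (M:ℝ) := by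
      rw [integral_add (hVint n) (integrable_const _), integral_const]
      simp
    have step3 : ∫ ω, V n ω ∂μ ≤ ∫ ω, V 0 ω ∂μ := by
      have := hsuper.setIntegral_le (Nat.zero_le n)
        (@MeasurableSet.univ Ω (ℱ 0))
      simpa [Measure.restrict_univ] using this
    have step4 : ∫ ω, V 0 ω ∂μ = ∫ ω, Z 0 ω ∂μ := by
      apply integral_congr_ae
      filter_upwards with ω
      simp [hV]
    linarith
  -- convergence of V
  have hVconv : ∀ᵐ ω ∂μ, ∃ c, Tendsto (fun n => V n ω) atTop (𝓝 c) := by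
    set R : NNReal := (∫ ω, Z 0 ω ∂μ + 2 * (M:ℝ)).toNNReal with hR
    have hbdd : ∀ n, eLpNorm (-V n) 1 μ ≤ (R : ENNReal) := by
      intro n
      rw [eLpNorm_neg]
      refine (hL1 n).trans ?_
      exact le_of_eq rfl
    have := (hsuper.neg.exists_ae_tendsto_of_bdd hbdd)
    filter_upwards [this] with ω ⟨c, hc⟩
    exact ⟨-c, by simpa using hc.neg⟩
  -- conclusion
  filter_upwards [hVconv] with ω ⟨c, hc⟩ hω
  refine ⟨c, ?_⟩
  have hmem : ∀ k, ω ∈ A k := fun k => hω k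
  have : ∀ n, Z n ω + ∑ k ∈ Finset.range n, (a k ω * Z k ω - b k ω) = V n ω := by
    intro n
    exact (hQ n ω (fun k _ => hmem k)).symm
  simpa only [this] using hc
theorem stmt_10 {Ω : Type*} {m0 : MeasurableSpace Ω} (μ : Measure Ω) [IsProbabilityMeasure μ]
    (ℱ : Filtration ℕ m0)
    (Y a b r : ℕ → Ω → ℝ)
    (hY : ∀ n ω, 0 ≤ Y n ω) (ha : ∀ n ω, 0 ≤ a n ω) (hb : ∀ n ω, 0 ≤ b n ω)
    (hr : ∀ n ω, 0 < r n ω)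
    (hYad : StronglyAdapted ℱ Y) (haad : StronglyAdapted ℱ a) (hbad : StronglyAdapted ℱ b) (hrad : StronglyAdapted ℱ r)
    (hint : ∀ n, Integrable (fun ω => r n ω * Y n ω) μ)
    (hdiva : ∀ᵐ ω ∂μ, Tendsto (fun N => ∑ n ∈ Finset.range N, a n ω) atTop atTop)
    (hsumb : ∀ᵐ ω ∂μ, Summable (fun n => b n ω))
    (hrec : ∀ n, ∀ᵐ ω ∂μ,
      (μ[fun ω' => r (n+1) ω' * Y (n+1) ω' | ℱ n]) ω ≤ (1 - a n ω) * r n ω * Y n ω + b n ω) :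
    ∀ᵐ ω ∂μ, Tendsto (fun n => r n ω * Y n ω) atTop (nhds 0) := by
  classical
  set Z : ℕ → Ω → ℝ := fun n ω => r n ω * Y n ω with hZdef
  have hZ : ∀ n ω, 0 ≤ Z n ω := fun n ω => mul_nonneg (hr n ω).le (hY n ω)
  have hZad : StronglyAdapted ℱ Z := fun n => (hrad n).mul (hYad n)
  have hrec' : ∀ n, ∀ᵐ ω ∂μ, (μ[Z (n+1) | ℱ n]) ω ≤ (1 - a n ω) * Z n ω + b n ω := by
    intro n
    filter_upwards [hrec n] with ω hω
    calc (μ[Z (n+1) | ℱ n]) ω = (μ[fun ω' => r (n+1) ω' * Y (n+1) ω' | ℱ n]) ω := rfl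
      _ ≤ (1 - a n ω) * r n ω * Y n ω + b n ω := hω
      _ = (1 - a n ω) * Z n ω + b n ω := by rw [hZdef]; ring
  have key : ∀ᵐ ω ∂μ, ∀ M : ℕ, (∀ n, ∑ j ∈ Finset.range (n+1), b j ω ≤ (M:ℝ)) →
      ∃ c, Tendsto (fun n => Z n ω + ∑ k ∈ Finset.range n, (a k ω * Z k ω - b k ω))
        atTop (𝓝 c) :=
    ae_all_iff.2 fun M => rs_aux μ ℱ Z a b hZ ha hb hZad haad hbad hint hrec' M
  filter_upwards [key, hsumb, hdiva] with ω hkey hsum hdiv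
  set B := ∑' k, b k ω with hBdef
  obtain ⟨M, hM⟩ := exists_nat_ge B
  have hpart : ∀ n, ∑ j ∈ Finset.range (n+1), b j ω ≤ (M:ℝ) := by
    intro n
    exact le_trans (Summable.sum_le_tsum _ (fun i _ => hb i ω) hsum) hM
  obtain ⟨c, hc⟩ := hkey M hpart
  have hBtend : Tendsto (fun n => ∑ k ∈ Finset.range n, b k ω) atTop (𝓝 B) :=
    hsum.hasSum.tendsto_sum_nat
  set S : ℕ → ℝ := fun n => ∑ k ∈ Finset.range n, a k ω * Z k ω with hSdef
  have hG : Tendsto (fun n => Z n ω + S n) atTop (𝓝 (c + B)) := by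
    have h := hc.add hBtend
    have heq : (fun n => (Z n ω + ∑ k ∈ Finset.range n, (a k ω * Z k ω - b k ω))
        + ∑ k ∈ Finset.range n, b k ω) = fun n => Z n ω + S n := by
      funext n
      rw [Finset.sum_sub_distrib, hSdef]
      ring
    rwa [heq] at h
  have hSmono : Monotone S := by
    apply monotone_nat_of_le_succ
    intro n
    rw [hSdef]
    simp only [Finset.sum_range_succ]
    exact le_add_of_nonneg_right (mul_nonneg (ha n ω) (hZ n ω))
  have hSbdd : BddAbove (Set.range S) := by
    obtain ⟨Cg, hCg⟩ := hG.bddAbove_range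
    refine ⟨Cg, ?_⟩
    rintro _ ⟨n, rfl⟩
    exact le_trans (le_add_of_nonneg_left (hZ n ω)) (hCg ⟨n, rfl⟩)
  have hS : Tendsto S atTop (𝓝 (⨆ n, S n)) := tendsto_atTop_ciSup hSmono hSbdd
  set C := ⨆ n, S n with hCdef
  set L := (c + B) - C with hLdef
  have hZtends : Tendsto (fun n => Z n ω) atTop (𝓝 L) := by
    have h := hG.sub hS
    have heq : (fun n => (Z n ω + S n) - S n) = fun n => Z n ω := by
      funext n; ring
    rwa [heq] at h
  have hL0 : 0 ≤ L :=
    le_of_tendsto_of_tendsto tendsto_const_nhds hZtends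
      (Eventually.of_forall fun n => hZ n ω)
  rcases eq_or_lt_of_le hL0 with hL | hL
  · exact hL ▸ hZtends
  exfalso
  have hev : ∀ᶠ k in atTop, L/2 ≤ Z k ω :=
    hZtends.eventually (eventually_ge_nhds (by linarith))
  obtain ⟨N, hN⟩ := eventually_atTop.mp hev
  set T : ℕ → ℝ := fun n => ∑ k ∈ Finset.range n, a k ω with hTdef
  have hSC : ∀ n, S n ≤ C := fun n => le_ciSup hSbdd n
  obtain ⟨n, hn1, hn2⟩ :=
    ((hdiv.eventually_ge_atTop (T N + (2/L)*(C - S N) + 1)).and (eventually_ge_atTop N)).exists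
  have h1 : (L/2) * (T n - T N) ≤ S n - S N := by
    rw [hSdef, hTdef]
    simp only
    rw [← Finset.sum_Ico_eq_sub _ hn2, ← Finset.sum_Ico_eq_sub _ hn2, Finset.mul_sum]
    refine Finset.sum_le_sum fun k hk => ?_
    have hk1 : N ≤ k := (Finset.mem_Ico.mp hk).1
    have := hN k hk1
    nlinarith [ha k ω]
  have halg : (L/2) * ((2/L)*(C - S N) + 1) = (C - S N) + L/2 := by
    field_simp
  nlinarith [hSC n, h1, hn1, hL]
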